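/- (Closed form of the modified L₂ discrepancy.) Let s ≥ 1, n ≥ 1, and let P = (x_1,…,x_n) be points in [0,1]^s with x_i = (x_{i1},…,x_{is}). Then Σ_{∅ ≠ u ⊆ {1,…,s}} ∫_{[0,1]^{|u|}} ( N_u(P, x_u)/n − ∏_{l∈u} x_l )² dx_u = (4/3)^s − (2^{1−s}/n)·Σ_{i=1}^n ∏_{l=1}^s (3 − x_{il}²) + (1/n²)·Σ_{i=1}^n Σ_{j=1}^n ∏_{l=1}^s (2 − max(x_{il}, x_{jl})), where for a nonempty subset u of {1,…,s} and x_u = (x_l)_{l∈u} ∈ [0,1]^{|u|}, N_u(P, x_u) is the number of indices i with x_{il} < x_l for every l ∈ u. -/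

import Mathlib

open MeasureTheory

noncomputable def mu0 : Measure ℝ := volume.restrict (Set.Icc (0:ℝ) 1)

instance : IsProbabilityMeasure mu0 :=
  ⟨by simp [mu0, Measure.restrict_apply, Real.volume_Icc]⟩


theorem aux_prod_succ {n : ℕ} (f : Fin (n+1) → ℝ → ℝ) (x : ℝ × (Fin n → ℝ)) :
    ∏ i, f i ((MeasurableEquiv.piFinSuccAbove (fun _ => ℝ) 0).symm x i)
      = f 0 x.1 * ∏ i : Fin n, f (Fin.succ i) (x.2 i) := by
  rw [Fin.prod_univ_succ]
  simp [MeasurableEquiv.piFinSuccAbove_symm_apply, Fin.zero_succAbove]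

theorem aux_int_fin {n : ℕ} (μ : Measure ℝ) [SigmaFinite μ] (f : Fin n → ℝ → ℝ)
    (hf : ∀ i, Integrable (f i) μ) :
    Integrable (fun x : Fin n → ℝ => ∏ i, f i (x i)) (Measure.pi fun _ => μ) := by
  induction n with
  | zero =>
    haveI : IsFiniteMeasure (Measure.pi fun _ : Fin 0 => μ) := ⟨by simp [Measure.pi_empty_univ]⟩
    simp [integrable_const_iff, Measure.pi_empty_univ]
  | succ n n_ih =>
      have h := ((measurePreserving_piFinSuccAbove (fun _ : Fin (n+1) => μ) 0).symm)
      rw [← h.integrable_comp_emb (MeasurableEquiv.measurableEmbedding _)]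
      have : ((fun x : Fin (n+1) → ℝ => ∏ i, f i (x i)) ∘
          (MeasurableEquiv.piFinSuccAbove (fun _ => ℝ) 0).symm)
          = fun x : ℝ × (Fin n → ℝ) => f 0 x.1 * ∏ i : Fin n, f (Fin.succ i) (x.2 i) :=
        funext fun x => aux_prod_succ f x
      rw [this]
      exact Integrable.mul_prod (hf 0) (n_ih _ (fun i => hf _))

theorem aux_integral_fin {n : ℕ} (μ : Measure ℝ) [SigmaFinite μ] (f : Fin n → ℝ → ℝ) :
    ∫ x : Fin n → ℝ, ∏ i, f i (x i) ∂(Measure.pi fun _ => μ) = ∏ i, ∫ x, f i x ∂μ := by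
  induction n with
  | zero => simp [Measure.pi_empty_univ, measureReal_def]
  | succ n n_ih =>
      calc
        _ = ∫ x : ℝ × (Fin n → ℝ),
            f 0 x.1 * ∏ i : Fin n, f (Fin.succ i) (x.2 i) ∂(μ.prod (Measure.pi fun _ => μ)) := by
          rw [← ((measurePreserving_piFinSuccAbove
            (fun _ : Fin (n+1) => μ) 0).symm).integral_comp']
          refine integral_congr_ae (Filter.Eventually.of_forall fun x => ?_)
          exact aux_prod_succ f x
        _ = (∫ x, f 0 x ∂μ) * ∏ i : Fin n, ∫ x, f (Fin.succ i) x ∂μ := by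
          rw [← n_ih, ← integral_prod_mul]
        _ = ∏ i, ∫ x, f i x ∂μ := by rw [Fin.prod_univ_succ]

theorem aux_int_prod {ι : Type*} [Fintype ι] (μ : Measure ℝ) [SigmaFinite μ] (f : ι → ℝ → ℝ)
    (hf : ∀ i, Integrable (f i) μ) :
    Integrable (fun x : ι → ℝ => ∏ i, f i (x i)) (Measure.pi fun _ => μ) := by
  let e := (Fintype.equivFin ι).symm
  rw [← (measurePreserving_piCongrLeft (fun _ : ι => μ) e).integrable_comp_emb
    (MeasurableEquiv.measurableEmbedding _)]
  have : ((fun x : ι → ℝ => ∏ i, f i (x i)) ∘ (MeasurableEquiv.piCongrLeft (fun _ => ℝ) e))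
      = fun x : Fin (Fintype.card ι) → ℝ => ∏ j, f (e j) (x j) := by
    funext x
    simp only [Function.comp_apply, MeasurableEquiv.coe_piCongrLeft]
    rw [← e.prod_comp]
    exact Finset.prod_congr rfl fun j _ => by rw [Equiv.piCongrLeft_apply_apply]
  rw [this]
  exact aux_int_fin μ _ (fun i => hf _)

theorem aux_integral_prod {ι : Type*} [Fintype ι] (μ : Measure ℝ) [SigmaFinite μ]
    (f : ι → ℝ → ℝ) :
    ∫ x : ι → ℝ, ∏ i, f i (x i) ∂(Measure.pi fun _ => μ) = ∏ i, ∫ x, f i x ∂μ := by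
  let e := (Fintype.equivFin ι).symm
  rw [← (measurePreserving_piCongrLeft (fun _ : ι => μ) e).integral_comp']
  calc
    _ = ∫ x : Fin (Fintype.card ι) → ℝ, ∏ j, f (e j) (x j) ∂(Measure.pi fun _ => μ) := by
      refine integral_congr_ae (Filter.Eventually.of_forall fun x => ?_)
      simp only [MeasurableEquiv.coe_piCongrLeft]
      rw [← e.prod_comp]
      exact Finset.prod_congr rfl fun j _ => by rw [Equiv.piCongrLeft_apply_apply]
    _ = ∏ j, ∫ x, f (e j) x ∂μ := aux_integral_fin μ _
    _ = ∏ i, ∫ x, f i x ∂μ := e.prod_comp fun i => ∫ x, f i x ∂μ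



theorem Ioi_inter_Icc {c : ℝ} (hc : c ∈ Set.Icc (0:ℝ) 1) :
    Set.Ioi c ∩ Set.Icc 0 1 = Set.Ioc c 1 := by
  ext x
  simp only [Set.mem_inter_iff, Set.mem_Ioi, Set.mem_Icc, Set.mem_Ioc]
  constructor
  · rintro ⟨h1, _, h3⟩; exact ⟨h1, h3⟩
  · rintro ⟨h1, h2⟩; exact ⟨h1, le_trans hc.1 h1.le, h2⟩

theorem int_sq : ∫ t, t ^ 2 ∂mu0 = 1 / 3 := by
  rw [mu0, ← integral_indicator measurableSet_Icc]
  rw [integral_indicator measurableSet_Icc, integral_Icc_eq_integral_Ioc,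
    ← intervalIntegral.integral_of_le (by norm_num : (0:ℝ) ≤ 1)]
  simp
  norm_num

theorem int_ind_one {c : ℝ} (hc : c ∈ Set.Icc (0:ℝ) 1) :
    ∫ t, (Set.Ioi c).indicator (fun _ => (1:ℝ)) t ∂mu0 = 1 - c := by
  rw [mu0, integral_indicator measurableSet_Ioi, Measure.restrict_restrict measurableSet_Ioi,
    Ioi_inter_Icc hc]
  simp [Real.volume_Ioc, ENNReal.toReal_ofReal (by linarith [hc.2] : (0:ℝ) ≤ 1 - c), hc.2]

theorem int_ind_id {c : ℝ} (hc : c ∈ Set.Icc (0:ℝ) 1) :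
    ∫ t, (Set.Ioi c).indicator (fun t => t) t ∂mu0 = (1 - c ^ 2) / 2 := by
  rw [mu0, integral_indicator measurableSet_Ioi, Measure.restrict_restrict measurableSet_Ioi,
    Ioi_inter_Icc hc, ← intervalIntegral.integral_of_le hc.2]
  rw [integral_id]
  ring



theorem intg_sq : Integrable (fun t => t ^ 2) mu0 := by
  rw [mu0]
  exact (continuous_pow 2).integrableOn_Icc

theorem intg_ind_one (c : ℝ) :
    Integrable ((Set.Ioi c).indicator (fun _ => (1:ℝ))) mu0 := by
  rw [integrable_indicator_iff measurableSet_Ioi]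
  exact integrableOn_const (measure_ne_top _ _) (by simp)

theorem intg_ind_id (c : ℝ) :
    Integrable ((Set.Ioi c).indicator (fun t => t)) mu0 := by
  rw [integrable_indicator_iff measurableSet_Ioi]
  rw [IntegrableOn, mu0, Measure.restrict_restrict measurableSet_Ioi]
  have h : Set.Ioi c ∩ Set.Icc (0:ℝ) 1 ⊆ Set.Icc 0 1 := Set.inter_subset_right
  exact (continuous_id.integrableOn_Icc).mono_set h


open scoped Classical in
theorem key_card {n : ℕ} {ι : Type*} [Fintype ι] (Q : Fin n → ι → ℝ) (x : ι → ℝ) :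
    ((Finset.univ.filter fun i => ∀ l : ι, Q i l < x l).card : ℝ)
      = ∑ i, ∏ l, (Set.Ioi (Q i l)).indicator (fun _ => (1:ℝ)) (x l) := by
  rw [← Finset.sum_boole]
  refine Finset.sum_congr rfl fun i _ => ?_
  simp only [Set.indicator_apply, Set.mem_Ioi, Finset.prod_boole, Finset.mem_univ,
    forall_true_left, true_implies]


open scoped Classical in
theorem key_pt {n : ℕ} {ι : Type*} [Fintype ι] (hn : 1 ≤ n) (Q : Fin n → ι → ℝ) (x : ι → ℝ)
    (hcard : ((Finset.univ.filter fun i => ∀ l : ι, Q i l < x l).card : ℝ)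
      = ∑ i, ∏ l, (Set.Ioi (Q i l)).indicator (fun _ => (1:ℝ)) (x l)) :
    (((Finset.univ.filter fun i => ∀ l : ι, Q i l < x l).card : ℝ) / n - ∏ l : ι, x l) ^ 2
    = (1/(n:ℝ)^2) * ∑ i, ∑ j, ∏ l : ι,
          (Set.Ioi (max (Q i l) (Q j l))).indicator (fun _ => (1:ℝ)) (x l)
      - (2/(n:ℝ)) * ∑ i, ∏ l : ι, (Set.Ioi (Q i l)).indicator (fun t => t) (x l)
      + ∏ l : ι, (x l) ^ 2 := by
  have hn' : (n:ℝ) ≠ 0 := by positivity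
  rw [hcard]
  set A := ∑ i, ∏ l, (Set.Ioi (Q i l)).indicator (fun _ => (1:ℝ)) (x l) with hA
  set B := ∏ l : ι, x l with hB
  have hA2 : A * A = ∑ i, ∑ j, ∏ l : ι,
      (Set.Ioi (max (Q i l) (Q j l))).indicator (fun _ => (1:ℝ)) (x l) := by
    rw [hA, Finset.sum_mul_sum]
    refine Finset.sum_congr rfl fun i _ => Finset.sum_congr rfl fun j _ => ?_
    rw [← Finset.prod_mul_distrib]
    refine Finset.prod_congr rfl fun l _ => ?_
    simp only [Set.indicator_apply, Set.mem_Ioi, max_lt_iff]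
    by_cases h1 : Q i l < x l <;> by_cases h2 : Q j l < x l <;> simp [h1, h2]
  have hAB : A * B = ∑ i, ∏ l : ι, (Set.Ioi (Q i l)).indicator (fun t => t) (x l) := by
    rw [hA, hB, Finset.sum_mul]
    refine Finset.sum_congr rfl fun i _ => ?_
    rw [← Finset.prod_mul_distrib]
    refine Finset.prod_congr rfl fun l _ => ?_
    simp only [Set.indicator_apply, Set.mem_Ioi]
    by_cases h1 : Q i l < x l <;> simp [h1]
  have hB2 : B * B = ∏ l : ι, (x l) ^ 2 := by
    rw [hB, ← Finset.prod_mul_distrib]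
    exact Finset.prod_congr rfl fun l _ => (sq (x l)).symm
  rw [← hA2, ← hAB, ← hB2]
  field_simp
  ring

open scoped Classical in
theorem key {n : ℕ} {ι : Type*} [Fintype ι] (hn : 1 ≤ n) (Q : Fin n → ι → ℝ)
    (hQ : ∀ i l, Q i l ∈ Set.Icc (0:ℝ) 1) :
    ∫ x : ι → ℝ, (((Finset.univ.filter fun i => ∀ l : ι, Q i l < x l).card : ℝ) / n
        - ∏ l : ι, x l) ^ 2 ∂(Measure.pi fun _ : ι => mu0)
    = (1/(n:ℝ)^2) * ∑ i, ∑ j, ∏ l : ι, (1 - max (Q i l) (Q j l))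
      - (2/(n:ℝ)) * ∑ i, ∏ l : ι, ((1 - Q i l ^ 2) / 2)
      + ∏ l : ι, (1/3 : ℝ) := by
  have hmax : ∀ i j l, max (Q i l) (Q j l) ∈ Set.Icc (0:ℝ) 1 :=
    fun i j l => ⟨le_trans (hQ i l).1 (le_max_left _ _), max_le (hQ i l).2 (hQ j l).2⟩
  have hIF : ∀ (i j : Fin n), Integrable (fun x : ι → ℝ => ∏ l : ι,
      (Set.Ioi (max (Q i l) (Q j l))).indicator (fun _ => (1:ℝ)) (x l))
      (Measure.pi fun _ : ι => mu0) :=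
    fun i j => aux_int_prod mu0 _ (fun l => intg_ind_one _)
  have hIG : ∀ (i : Fin n), Integrable (fun x : ι → ℝ => ∏ l : ι,
      (Set.Ioi (Q i l)).indicator (fun t => t) (x l)) (Measure.pi fun _ : ι => mu0) :=
    fun i => aux_int_prod mu0 _ (fun l => intg_ind_id _)
  have hIH : Integrable (fun x : ι → ℝ => ∏ l : ι, (x l) ^ 2) (Measure.pi fun _ : ι => mu0) :=
    aux_int_prod mu0 _ (fun l => intg_sq)
  have hIF' : Integrable (fun x : ι → ℝ => (1/(n:ℝ)^2) * ∑ i, ∑ j, ∏ l : ι,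
      (Set.Ioi (max (Q i l) (Q j l))).indicator (fun _ => (1:ℝ)) (x l))
      (Measure.pi fun _ : ι => mu0) :=
    (integrable_finset_sum _ fun i _ => integrable_finset_sum _ fun j _ => hIF i j).const_mul _
  have hIG' : Integrable (fun x : ι → ℝ => (2/(n:ℝ)) * ∑ i, ∏ l : ι,
      (Set.Ioi (Q i l)).indicator (fun t => t) (x l)) (Measure.pi fun _ : ι => mu0) :=
    (integrable_finset_sum _ fun i _ => hIG i).const_mul _
  calc
    _ = ∫ x : ι → ℝ, ((1/(n:ℝ)^2) * ∑ i, ∑ j, ∏ l : ι,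
          (Set.Ioi (max (Q i l) (Q j l))).indicator (fun _ => (1:ℝ)) (x l)
        - (2/(n:ℝ)) * ∑ i, ∏ l : ι, (Set.Ioi (Q i l)).indicator (fun t => t) (x l)
        + ∏ l : ι, (x l) ^ 2) ∂(Measure.pi fun _ : ι => mu0) := by
      refine integral_congr_ae (Filter.Eventually.of_forall fun x => ?_)
      exact key_pt hn Q x (key_card Q x)
    _ = (1/(n:ℝ)^2) * ∑ i, ∑ j, ∏ l : ι, (1 - max (Q i l) (Q j l))
      - (2/(n:ℝ)) * ∑ i, ∏ l : ι, ((1 - Q i l ^ 2) / 2)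
      + ∏ l : ι, (1/3 : ℝ) := by
      have hIFG : Integrable (fun x : ι → ℝ => (1/(n:ℝ)^2) * (∑ i, ∑ j, ∏ l : ι,
          (Set.Ioi (max (Q i l) (Q j l))).indicator (fun _ => (1:ℝ)) (x l))
          - (2/(n:ℝ)) * ∑ i, ∏ l : ι, (Set.Ioi (Q i l)).indicator (fun t => t) (x l))
          (Measure.pi fun _ : ι => mu0) := hIF'.sub hIG'
      rw [integral_add hIFG hIH, integral_sub hIF' hIG',
        integral_const_mul, integral_const_mul, integral_finset_sum _ (fun i _ =>
          integrable_finset_sum _ fun j _ => hIF i j),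
        integral_finset_sum _ (fun i _ => hIG i)]
      congr 1
      · congr 1
        · congr 1
          refine Finset.sum_congr rfl fun i _ => ?_
          rw [integral_finset_sum _ (fun j _ => hIF i j)]
          refine Finset.sum_congr rfl fun j _ => ?_
          rw [aux_integral_prod]
          exact Finset.prod_congr rfl fun l _ => int_ind_one (hmax i j l)
        · congr 1
          refine Finset.sum_congr rfl fun i _ => ?_
          rw [aux_integral_prod]
          exact Finset.prod_congr rfl fun l _ => int_ind_id (hQ i l)
      · exact (aux_integral_prod mu0 (fun _ : ι => fun t => t ^ 2)).trans
          (Finset.prod_congr rfl fun l _ => int_sq)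


theorem sum_powerset_nonempty {s : ℕ} (a : Fin s → ℝ) :
    ∑ u ∈ (Finset.univ : Finset (Fin s)).powerset.filter Finset.Nonempty, ∏ l ∈ u, a l
      = ∏ l, (1 + a l) - 1 := by
  have h0 : ∏ l, (1 + a l) = ∑ u ∈ (Finset.univ : Finset (Fin s)).powerset, ∏ l ∈ u, a l := by
    have := Finset.prod_add a (fun _ => (1:ℝ)) (Finset.univ : Finset (Fin s))
    simp only [Finset.prod_const_one, mul_one] at this
    rw [← this]
    exact Finset.prod_congr rfl fun l _ => (add_comm _ _)
  have h1 : (Finset.univ : Finset (Fin s)).powerset.filter Finset.Nonempty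
      = (Finset.univ : Finset (Fin s)).powerset.erase ∅ := by
    ext u
    simp [Finset.mem_erase, Finset.nonempty_iff_ne_empty, and_comm]
  rw [h1, Finset.sum_erase_eq_sub (by simp), ← h0, Finset.prod_empty]

theorem mu0_def : mu0 = volume.restrict (Set.Icc (0:ℝ) 1) := rfl

open scoped Classical in
/-- **Closed form of the modified `L₂` discrepancy**: summing, over all nonempty
subsets `u` of the coordinates, the integrated squared local discrepancy of the
projection of the points onto the coordinates in `u` gives
`(4/3)^s - (2^{1-s}/n)·Σ_i ∏_l (3 - x_{il}²) + (1/n²)·Σ_i Σ_j ∏_l (2 - max(x_{il}, x_{jl}))`. -/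
theorem modified_L2_discrepancy_formula (s n : ℕ) (hs : 1 ≤ s) (hn : 1 ≤ n)
    (P : Fin n → Fin s → ℝ) (hP : ∀ i l, P i l ∈ Set.Icc (0 : ℝ) 1) :
    (∑ u ∈ (Finset.univ : Finset (Fin s)).powerset.filter Finset.Nonempty,
        ∫ xu : { l // l ∈ u } → ℝ,
          (((Finset.univ.filter fun i => ∀ l : { l // l ∈ u }, P i l < xu l).card : ℝ) / n
              - ∏ l : { l // l ∈ u }, xu l) ^ 2
          ∂(Measure.pi fun _ : { l // l ∈ u } => volume.restrict (Set.Icc (0 : ℝ) 1)))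
      = (4 / 3 : ℝ) ^ s
        - (2 : ℝ) ^ (1 - (s : ℤ)) / n * ∑ i, ∏ l, (3 - P i l ^ 2)
        + 1 / (n : ℝ) ^ 2 * ∑ i, ∑ j, ∏ l, (2 - max (P i l) (P j l)) := by
  have hn' : (n:ℝ) ≠ 0 := by
    have : 0 < n := hn
    exact_mod_cast this.ne'
  calc
    _ = ∑ u ∈ (Finset.univ : Finset (Fin s)).powerset.filter Finset.Nonempty,
        ((1/(n:ℝ)^2) * ∑ i, ∑ j, ∏ l ∈ u, (1 - max (P i l) (P j l))
          - (2/(n:ℝ)) * ∑ i, ∏ l ∈ u, ((1 - P i l ^ 2) / 2)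
          + ∏ l ∈ u, (1/3 : ℝ)) := by
      refine Finset.sum_congr rfl fun u hu => ?_
      simp only [← mu0_def]
      rw [key hn (fun i (l : {l // l ∈ u}) => P i ↑l) (fun i l => hP i ↑l)]
      congr 1
      · congr 1
        · congr 1
          refine Finset.sum_congr rfl fun i _ => Finset.sum_congr rfl fun j _ => ?_
          exact Finset.prod_coe_sort u (fun l => 1 - max (P i l) (P j l))
        · congr 1
          refine Finset.sum_congr rfl fun i _ => ?_
          exact Finset.prod_coe_sort u (fun l => (1 - P i l ^ 2) / 2)
      · exact Finset.prod_coe_sort u (fun _ => (1/3 : ℝ))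
    _ = (1/(n:ℝ)^2) * ∑ i, ∑ j, (∏ l, (2 - max (P i l) (P j l)) - 1)
        - (2/(n:ℝ)) * ∑ i, ((∏ l, (3 - P i l ^ 2)) / 2 ^ s - 1)
        + ((4/3 : ℝ) ^ s - 1) := by
      rw [Finset.sum_add_distrib, Finset.sum_sub_distrib]
      congr 1
      · congr 1
        · rw [← Finset.mul_sum]
          congr 1
          rw [Finset.sum_comm]
          refine Finset.sum_congr rfl fun i _ => ?_
          rw [Finset.sum_comm]
          refine Finset.sum_congr rfl fun j _ => ?_
          rw [sum_powerset_nonempty]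
          congr 1
          exact Finset.prod_congr rfl fun l _ => by ring
        · rw [← Finset.mul_sum]
          congr 1
          rw [Finset.sum_comm]
          refine Finset.sum_congr rfl fun i _ => ?_
          rw [sum_powerset_nonempty]
          congr 1
          rw [show ∀ f : Fin s → ℝ, ∏ l, (1 + f l) = ∏ l, (1 + f l) from fun _ => rfl]
          calc ∏ l, (1 + (1 - P i l ^ 2) / 2) = ∏ l, ((3 - P i l ^ 2) / 2) :=
                Finset.prod_congr rfl fun l _ => by ring
            _ = (∏ l, (3 - P i l ^ 2)) / 2 ^ s := by
                rw [Finset.prod_div_distrib, Finset.prod_const, Finset.card_univ,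
                  Fintype.card_fin]
      · rw [sum_powerset_nonempty]
        norm_num
        rw [div_pow]
    _ = (1/(n:ℝ)^2) * ((∑ i, ∑ j, ∏ l, (2 - max (P i l) (P j l))) - n * n)
        - (2/(n:ℝ)) * ((∑ i, ∏ l, (3 - P i l ^ 2)) / 2 ^ s - n)
        + ((4/3 : ℝ) ^ s - 1) := by
      simp only [Finset.sum_sub_distrib, Finset.sum_const, Finset.card_univ, Fintype.card_fin,
        nsmul_eq_mul, mul_one, Finset.sum_div]
    _ = _ := by
      have h2 : (2:ℝ) ^ (1 - (s:ℤ)) = 2 / 2 ^ s := by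
        rw [zpow_sub₀ (two_ne_zero), zpow_one, zpow_natCast]
      have h2s : (2:ℝ) ^ s ≠ 0 := by positivity
      rw [h2]
      field_simp
      ring
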